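/- Let T = cS, where c ∈ (Σ ∪ Π)∖{$} and S is a p-string of length n ≥ 1 ending with $, with $ occurring nowhere else in S, and let k_S = RA_S⁻¹[n]. If c ∈ Σ, then for every i ∈ {1,…,n}, F°_T[i] = F_S[i], and L°_T[i] = L_S[i] for all i ≠ k_S, while L°_T[k_S] = c. -/

import Mathlib

/-! Common framework: parameterized strings over static alphabet `σ` and
parameter alphabet `π`.  A p-string is a `List (σ ⊕ π)`. -/

variable {σ π : Type*}

instance instInhabSum [Inhabited σ] : Inhabited (σ ⊕ π) := ⟨Sum.inl default⟩

/-- one right rotation: the last character moves to the front -/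
def rotR1 {α : Type*} (W : List α) : List α := W.rotate (W.length - 1)

/-- `rotR W i` is the `i`-th right rotation `Rot(W, i)` -/
def rotR {α : Type*} (W : List α) : ℕ → List α
  | 0 => W
  | i + 1 => rotR1 (rotR W i)

/-- 1-based access `W[i]` (junk default outside the range) -/
def get1 {α : Type*} [Inhabited α] (W : List α) (i : ℕ) : α := W.getD (i - 1) default

/-- the prev-encoding `⟨T⟩`, a list over `σ ⊕ ℕ∞` -/
def prevEnc [DecidableEq σ] [DecidableEq π] (T : List (σ ⊕ π)) : List (σ ⊕ ℕ∞) :=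
  (List.range T.length).map fun k =>
    match T[k]? with
    | none => Sum.inr ⊤
    | some (Sum.inl a) => Sum.inl a
    | some (Sum.inr b) =>
      match ((List.range k).filter fun j => T[j]? = some (Sum.inr b)).max? with
      | none => Sum.inr ⊤
      | some j => Sum.inr ((k - j : ℕ) : ℕ∞)

/-- number of distinct parameter characters occurring in `W` -/
def distinctParams [DecidableEq π] (W : List (σ ⊕ π)) : ℕ :=
  (W.filterMap Sum.getRight?).dedup.length

/-- the encoding `⟦T⟧`, a list over `σ ⊕ ℕ`:  a static character is kept; a
parameter character at (1-based) position `i` is replaced by the number of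
distinct parameter characters in `Rot(T, n-i)[1:ℓ]` where `ℓ` is the leftmost
occurrence position of `T[i]` in `Rot(T, n-i)`. -/
def encodeE [DecidableEq σ] [DecidableEq π] (T : List (σ ⊕ π)) : List (σ ⊕ ℕ) :=
  (List.range T.length).map fun k =>
    match T[k]? with
    | none => Sum.inr 0
    | some (Sum.inl a) => Sum.inl a
    | some (Sum.inr b) =>
      let R := rotR T (T.length - (k + 1))
      Sum.inr (distinctParams (R.take (R.idxOf (Sum.inr b) + 1)))

/-- order on prev-encoding characters: every static character is smaller than
every element of `ℕ∞` (and `ℕ∞` carries its usual order with `∞` on top) -/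
def pvlt [LT σ] : (σ ⊕ ℕ∞) → (σ ⊕ ℕ∞) → Prop
  | Sum.inl a, Sum.inl b => a < b
  | Sum.inl _, Sum.inr _ => True
  | Sum.inr _, Sum.inl _ => False
  | Sum.inr x, Sum.inr y => x < y

/-- `T` is a p-string of length ≥ 1 ending with the static character `d`,
which occurs nowhere else in `T`. -/
def EndsWith [DecidableEq σ] [DecidableEq π] (T : List (σ ⊕ π)) (d : σ) : Prop :=
  1 ≤ T.length ∧ T.getLast? = some (Sum.inl d) ∧ T.count (Sum.inl d) = 1

/-- `RA` represents the parameterized rotation array `RA_T` (0-based indices: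
`RA_T[i] = (RA ⟨i-1⟩).val + 1`): the prev-encodings of the rotations are listed
in strictly increasing lexicographic order. -/
def IsRA [LinearOrder σ] [DecidableEq π] (T : List (σ ⊕ π))
    (RA : Fin T.length ≃ Fin T.length) : Prop :=
  ∀ i j : Fin T.length, i < j →
    List.Lex pvlt (prevEnc (rotR T ((RA i).val + 1))) (prevEnc (rotR T ((RA j).val + 1)))

/-- `LF` represents the LF mapping: `LF_T(i) = j` iff `T_{RA_T[i]+1} = T_{RA_T[j]}`. -/
def IsLF [LinearOrder σ] [DecidableEq π] (T : List (σ ⊕ π))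
    (RA LF : Fin T.length ≃ Fin T.length) : Prop :=
  ∀ i : Fin T.length, rotR T ((RA i).val + 2) = rotR T ((RA (LF i)).val + 1)

/-- the pBWT array `L_T[i] = ⟦T_{RA_T[i]}⟧[n]` -/
def Larr [LinearOrder σ] [DecidableEq π] [Inhabited σ] (T : List (σ ⊕ π))
    (RA : Fin T.length ≃ Fin T.length) (i : Fin T.length) : σ ⊕ ℕ :=
  get1 (encodeE (rotR T ((RA i).val + 1))) T.length

/-- the array `F_T[i] = ⟦T_{RA_T[i]}⟧[1]` -/
def Farr [LinearOrder σ] [DecidableEq π] [Inhabited σ] (T : List (σ ⊕ π))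
    (RA : Fin T.length ≃ Fin T.length) (i : Fin T.length) : σ ⊕ ℕ :=
  get1 (encodeE (rotR T ((RA i).val + 1))) 1

/-- longest common prefix of two lists -/
def lcp {α : Type*} [DecidableEq α] : List α → List α → List α
  | a :: as, b :: bs => if a = b then a :: lcp as bs else []
  | _, _ => []

/-- `lcp∞(X, Y)`: the number of `∞`'s in the longest common prefix of `X` and `Y` -/
def lcpInf [DecidableEq σ] (X Y : List (σ ⊕ ℕ∞)) : ℕ :=
  (lcp X Y).count (Sum.inr ⊤)

/-- the `∞`-LCP array (1-based): `LCP∞_T[i] = lcp∞(⟨T_{RA_T[i]}⟩, ⟨T_{RA_T[i+1]}⟩)`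
for `1 ≤ i < n`, and `0` otherwise. -/
def LCPa [LinearOrder σ] [DecidableEq π] (T : List (σ ⊕ π))
    (RA : Fin T.length ≃ Fin T.length) (i : ℕ) : ℕ :=
  if h : 1 ≤ i ∧ i < T.length then
    lcpInf (prevEnc (rotR T ((RA ⟨i - 1, by omega⟩).val + 1)))
           (prevEnc (rotR T ((RA ⟨i, h.2⟩).val + 1)))
  else 0

/-- parameterized match: a bijection on `σ ⊕ π` fixing all static characters
renames `S` into `T` -/
def PMatch (S T : List (σ ⊕ π)) : Prop :=
  ∃ f : (σ ⊕ π) ≃ (σ ⊕ π), (∀ a : σ, f (Sum.inl a) = Sum.inl a) ∧ S.map f = T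

/-- leftmost (1-based) occurrence position of `c` in `W`, `0` if absent -/
def leftPos [DecidableEq σ] [DecidableEq π] (W : List (σ ⊕ π)) (c : σ ⊕ π) : ℕ :=
  if W.contains c then W.idxOf c + 1 else 0

/-- rightmost (1-based) occurrence position of `c` in `W`, `0` if absent -/
def rightPos [DecidableEq σ] [DecidableEq π] (W : List (σ ⊕ π)) (c : σ ⊕ π) : ℕ :=
  if W.contains c then W.length - W.reverse.idxOf c else 0


/-! ### Auxiliary lemmas for the proof -/

theorem sum_beq_iff [DecidableEq σ] [DecidableEq π] : ∀ (x y : σ ⊕ π), (x == y) = true ↔ x = y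
  | Sum.inl x, Sum.inl y => by
    rw [show ((Sum.inl x : σ⊕π) == Sum.inl y) = (x == y) from rfl]; simp
  | Sum.inl x, Sum.inr y => by
    rw [show ((Sum.inl x : σ⊕π) == Sum.inr y) = false from rfl]; simp
  | Sum.inr x, Sum.inl y => by
    rw [show ((Sum.inr x : σ⊕π) == Sum.inl y) = false from rfl]; simp
  | Sum.inr x, Sum.inr y => by
    rw [show ((Sum.inr x : σ⊕π) == Sum.inr y) = (x == y) from rfl]; simp

theorem indexOf_cons_ne' [DecidableEq σ] [DecidableEq π] (l : List (σ⊕π)) {a b : σ⊕π}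
    (h : b ≠ a) : (b :: l).idxOf a = l.idxOf a + 1 := by
  have : (b == a) = false := by
    rcases Bool.eq_false_or_eq_true (b == a) with h' | h'
    · exact absurd ((sum_beq_iff _ _).1 h') h
    · exact h'
  simp [List.idxOf_cons, this]

theorem indexOf_cons_self' [DecidableEq σ] [DecidableEq π] (a : σ⊕π) (l : List (σ⊕π)) :
    (a :: l).idxOf a = 0 := by
  simp [List.idxOf_cons, (sum_beq_iff a a).2 rfl]

theorem rotR_eq_rotate {α : Type*} (W : List α) (i : ℕ) :
    rotR W i = W.rotate (i * (W.length - 1)) := by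
  induction i with
  | zero => simp [rotR]
  | succ i ih =>
    rw [rotR, ih, rotR1, List.length_rotate, List.rotate_rotate]
    congr 1
    ring

theorem mod_helper (p n : ℕ) (h1 : 1 ≤ p) (h2 : p ≤ n) : p * (n - 1) % n = n - p := by
  obtain ⟨m, rfl⟩ : ∃ m, n = m + 1 := ⟨n - 1, by omega⟩
  obtain ⟨q, rfl⟩ : ∃ q, p = 1 + q := ⟨p - 1, by omega⟩
  simp only [Nat.add_sub_cancel]
  have e : (1 + q) * m = (m - q) + q * (m + 1) := by
    rw [Nat.add_mul, Nat.one_mul, Nat.mul_add, Nat.mul_one]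
    generalize q * m = t
    omega
  rw [e, Nat.add_mul_mod_self_right, Nat.mod_eq_of_lt (by omega)]
  omega

theorem rotR_eq_drop_take {α : Type*} (W : List α) (p : ℕ) (h1 : 1 ≤ p)
    (h2 : p ≤ W.length) :
    rotR W p = W.drop (W.length - p) ++ W.take (W.length - p) := by
  rw [rotR_eq_rotate, ← List.rotate_mod, mod_helper p W.length h1 h2,
    List.rotate_eq_drop_append_take (by omega)]

theorem rotR_pred {α : Type*} (W : List α) (h : 1 ≤ W.length) :
    rotR W (W.length - 1) = W.drop 1 ++ W.take 1 := by
  rcases Nat.lt_or_ge W.length 2 with h2 | h2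
  · have h1 : W.length = 1 := by omega
    obtain ⟨x, rfl⟩ := List.length_eq_one_iff.mp h1
    simp [rotR]
  · rw [rotR_eq_drop_take W (W.length - 1) (by omega) (by omega)]
    congr 2 <;> omega

theorem encodeE_getD_inl [DecidableEq σ] [DecidableEq π] [Inhabited σ]
    (W : List (σ ⊕ π)) (k : ℕ) (hk : k < W.length) (c : σ)
    (h : W[k]? = some (Sum.inl c)) :
    (encodeE W).getD k default = Sum.inl c := by
  unfold encodeE
  rw [List.getD_eq_getElem?_getD, List.getElem?_map, List.getElem?_range hk,
    Option.map_some, Option.getD_some, h]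

theorem encodeE_getD_inr [DecidableEq σ] [DecidableEq π] [Inhabited σ]
    (W : List (σ ⊕ π)) (k : ℕ) (hk : k < W.length) (b : π)
    (h : W[k]? = some (Sum.inr b)) :
    (encodeE W).getD k default =
      Sum.inr (distinctParams ((rotR W (W.length - (k + 1))).take
        ((rotR W (W.length - (k + 1))).idxOf (Sum.inr b) + 1))) := by
  unfold encodeE
  rw [List.getD_eq_getElem?_getD, List.getElem?_map, List.getElem?_range hk,
    Option.map_some, Option.getD_some, h]

theorem take_indexOf_filterMap [DecidableEq σ] [DecidableEq π] (a : σ) (b : π) :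
    ∀ (L₁ L₂ : List (σ ⊕ π)), Sum.inr b ∈ L₁ ++ L₂ →
    ((L₁ ++ Sum.inl a :: L₂).take ((L₁ ++ Sum.inl a :: L₂).idxOf (Sum.inr b) + 1)).filterMap
        Sum.getRight?
      = ((L₁ ++ L₂).take ((L₁ ++ L₂).idxOf (Sum.inr b) + 1)).filterMap Sum.getRight?
  | [], L₂, h => by
    simp only [List.nil_append]
    rw [indexOf_cons_ne' L₂ (show Sum.inl a ≠ Sum.inr b by simp)]
    simp [List.take_succ_cons, Sum.getRight?, List.filterMap_cons, Sum.getRight?_inl]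
  | c :: L₁, L₂, h => by
    by_cases hc : c = Sum.inr b
    · subst hc
      rw [List.cons_append, List.cons_append, indexOf_cons_self',
        indexOf_cons_self']
      simp
    · have hmem : Sum.inr b ∈ L₁ ++ L₂ := by
        rcases List.mem_append.mp h with h' | h'
        · rcases List.mem_cons.mp h' with h'' | h''
          · exact absurd h''.symm hc
          · exact List.mem_append.mpr (Or.inl h'')
        · exact List.mem_append.mpr (Or.inr h')
      rw [List.cons_append, List.cons_append,
        indexOf_cons_ne' (L₁ ++ Sum.inl a :: L₂) hc,
        indexOf_cons_ne' (L₁ ++ L₂) hc]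
      simp only [List.take_succ_cons, List.filterMap_cons]
      rw [take_indexOf_filterMap a b L₁ L₂ hmem]

theorem distinctParams_insert [DecidableEq σ] [DecidableEq π] (a : σ) (b : π)
    (L₁ L₂ : List (σ ⊕ π)) (h : Sum.inr b ∈ L₁ ++ L₂) :
    distinctParams ((L₁ ++ Sum.inl a :: L₂).take
        ((L₁ ++ Sum.inl a :: L₂).idxOf (Sum.inr b) + 1))
      = distinctParams ((L₁ ++ L₂).take ((L₁ ++ L₂).idxOf (Sum.inr b) + 1)) := by
  unfold distinctParams
  rw [take_indexOf_filterMap a b L₁ L₂ h]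

/-- Let `T = cS` with `c ∈ Σ ∖ {$}` and let `k_S = RA_S⁻¹[n]`.
Then `F°_T[i] = F_S[i]` for every `i`, `L°_T[i] = L_S[i]` for `i ≠ k_S`, and
`L°_T[k_S] = c`, where `L°_T[i] = ⟦T_{RA_S[i]}⟧[n+1]` and `F°_T[i] = ⟦T_{RA_S[i]}⟧[1]`. -/
theorem updateLF_static [LinearOrder σ] [DecidableEq π] [Inhabited σ]
    (d : σ) (hd : ∀ a : σ, d ≤ a)
    (S : List (σ ⊕ π)) (hS : EndsWith S d)
    (a : σ) (ha : a ≠ d)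
    (RAS : Fin S.length ≃ Fin S.length) (hRAS : IsRA S RAS)
    (kS : Fin S.length) (hkS : (RAS kS).val + 1 = S.length) :
    ∀ i : Fin S.length,
      get1 (encodeE (rotR (Sum.inl a :: S) ((RAS i).val + 1))) 1
          = get1 (encodeE (rotR S ((RAS i).val + 1))) 1 ∧
      (i ≠ kS →
        get1 (encodeE (rotR (Sum.inl a :: S) ((RAS i).val + 1))) (S.length + 1)
          = get1 (encodeE (rotR S ((RAS i).val + 1))) S.length) ∧
      (i = kS →
        get1 (encodeE (rotR (Sum.inl a :: S) ((RAS i).val + 1))) (S.length + 1)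
          = Sum.inl a) := by
  intro i
  have hn : 1 ≤ S.length := hS.1
  obtain ⟨p, hp⟩ : ∃ p, p = (RAS i).val + 1 := ⟨_, rfl⟩
  rw [← hp]
  have hp1 : 1 ≤ p := by omega
  have hp2 : p ≤ S.length := by
    have := (RAS i).isLt
    omega
  obtain ⟨q, hq_def⟩ : ∃ q, S.length - p = q := ⟨_, rfl⟩
  have hq : q < S.length := by omega
  have hWS : rotR S p = S.drop q ++ S.take q := by
    rw [rotR_eq_drop_take S p hp1 hp2, hq_def]
  have hWT : rotR (Sum.inl a :: S) p = S.drop q ++ Sum.inl a :: S.take q := by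
    have h2 : p ≤ (Sum.inl a :: S : List (σ ⊕ π)).length := by
      simp only [List.length_cons]
      omega
    rw [rotR_eq_drop_take _ p hp1 h2]
    have h3 : (Sum.inl a :: S : List (σ ⊕ π)).length - p = q + 1 := by
      simp only [List.length_cons]
      omega
    rw [h3, List.drop_succ_cons, List.take_succ_cons]
  have hlenS : (rotR S p).length = S.length := by
    rw [hWS]
    simp only [List.length_append, List.length_drop, List.length_take]
    omega
  have hlenT : (rotR (Sum.inl a :: S) p).length = S.length + 1 := by
    rw [hWT]
    simp only [List.length_append, List.length_cons, List.length_take,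
      List.length_drop]
    omega
  obtain ⟨c, D', hD⟩ : ∃ c D', S.drop q = c :: D' := by
    have hdl : (S.drop q).length = S.length - q := by simp
    cases hDv : S.drop q with
    | nil => rw [hDv] at hdl; simp at hdl; omega
    | cons c D' => exact ⟨c, D', rfl⟩
  have hget0S : (rotR S p)[0]? = some c := by
    rw [hWS, hD]; rfl
  have hget0T : (rotR (Sum.inl a :: S) p)[0]? = some c := by
    rw [hWT, hD]; rfl
  refine ⟨?_, ?_, ?_⟩
  · -- F part
    simp only [get1, Nat.sub_self]
    cases c with
    | inl a' =>
      rw [encodeE_getD_inl _ 0 (by omega) a' hget0T,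
        encodeE_getD_inl _ 0 (by omega) a' hget0S]
    | inr b =>
      rw [encodeE_getD_inr _ 0 (by omega) b hget0T,
        encodeE_getD_inr _ 0 (by omega) b hget0S, hlenT, hlenS]
      have e1 : S.length + 1 - (0 + 1) = S.length := by omega
      have e2 : S.length - (0 + 1) = S.length - 1 := by omega
      rw [e1, e2]
      have hRT : rotR (rotR (Sum.inl a :: S) p) S.length
          = D' ++ Sum.inl a :: (S.take q ++ [Sum.inr b]) := by
        have h1 : rotR (rotR (Sum.inl a :: S) p)
            ((rotR (Sum.inl a :: S) p).length - 1)
            = (rotR (Sum.inl a :: S) p).drop 1 ++ (rotR (Sum.inl a :: S) p).take 1 :=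
          rotR_pred _ (by omega)
        rw [hlenT] at h1
        simp only [Nat.add_sub_cancel] at h1
        rw [h1, hWT, hD, List.cons_append]
        simp [List.append_assoc]
      have hRS : rotR (rotR S p) (S.length - 1) = D' ++ (S.take q ++ [Sum.inr b]) := by
        have h1 : rotR (rotR S p) ((rotR S p).length - 1)
            = (rotR S p).drop 1 ++ (rotR S p).take 1 := rotR_pred _ (by omega)
        rw [hlenS] at h1
        rw [h1, hWS, hD, List.cons_append]
        simp [List.append_assoc]
      rw [hRT, hRS]
      exact congrArg Sum.inr
        (distinctParams_insert a b D' (S.take q ++ [Sum.inr b]) (by simp))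
  · -- L part, i ≠ kS
    intro hne
    have hpn : p < S.length := by
      rcases lt_or_eq_of_le hp2 with h | h
      · exact h
      · exfalso
        apply hne
        apply RAS.injective
        apply Fin.ext
        omega
    have hq1 : 1 ≤ q := by omega
    obtain ⟨q', hq'⟩ : ∃ q', q = q' + 1 := ⟨q - 1, by omega⟩
    have hKlen : (S.take q).length = q := by
      simp only [List.length_take]
      omega
    obtain ⟨c', hc'⟩ : ∃ c', (S.take q)[q']? = some c' := by
      rw [List.getElem?_eq_getElem (by omega)]
      exact ⟨_, rfl⟩
    have hgetS : (rotR S p)[S.length - 1]? = some c' := by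
      rw [hWS, List.getElem?_append_right
        (by simp only [List.length_drop]; omega)]
      have h4 : S.length - 1 - (S.drop q).length = q' := by
        simp only [List.length_drop]
        omega
      rw [h4, hc']
    have hgetT : (rotR (Sum.inl a :: S) p)[S.length]? = some c' := by
      rw [hWT, List.getElem?_append_right
        (by simp only [List.length_drop]; omega)]
      have h4 : S.length - (S.drop q).length = q' + 1 := by
        simp only [List.length_drop]
        omega
      rw [h4, List.getElem?_cons_succ, hc']
    simp only [get1]
    have e1 : S.length + 1 - 1 = S.length := by omega
    rw [e1]
    cases c' with
    | inl a' =>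
      rw [encodeE_getD_inl _ S.length (by omega) a' hgetT,
        encodeE_getD_inl _ (S.length - 1) (by omega) a' hgetS]
    | inr b =>
      rw [encodeE_getD_inr _ S.length (by omega) b hgetT,
        encodeE_getD_inr _ (S.length - 1) (by omega) b hgetS, hlenT, hlenS]
      have e2 : S.length + 1 - (S.length + 1) = 0 := by omega
      have e3 : S.length - (S.length - 1 + 1) = 0 := by omega
      rw [e2, e3]
      rw [show rotR (rotR (Sum.inl a :: S) p) 0 = rotR (Sum.inl a :: S) p from rfl,
        show rotR (rotR S p) 0 = rotR S p from rfl, hWT, hWS]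
      have hmem : Sum.inr b ∈ S.drop q ++ S.take q := by
        apply List.mem_append.mpr
        right
        exact List.mem_of_getElem? hc'
      exact congrArg Sum.inr (distinctParams_insert a b (S.drop q) (S.take q) hmem)
  · -- L part, i = kS
    intro heq
    have hpn : p = S.length := by
      rw [hp, heq]
      exact hkS
    have hq0 : q = 0 := by omega
    have hget : (rotR (Sum.inl a :: S) p)[S.length]? = some (Sum.inl a) := by
      rw [hWT, hq0]
      simp only [List.drop_zero, List.take_zero]
      rw [List.getElem?_append_right (by omega)]
      have h5 : S.length - S.length = 0 := by omega
      rw [h5]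
      rfl
    simp only [get1]
    have e1 : S.length + 1 - 1 = S.length := by omega
    rw [e1]
    exact encodeE_getD_inl _ S.length (by omega) a hget
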